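/- Let T be a completely non-unitary contraction on H and let x, y ∈ H. Suppose that for every λ ∈ ℂ with |λ| < 1: (i) ⟨y, (Id − λ̄T)⁻¹f⟩ = λ⟨x, (Id − λ̄T)⁻¹f⟩ for all f ∈ K⋆^⊥, and (ii) ⟨x, (Id − λ̄T*)⁻¹g⟩ = λ⟨y, (Id − λ̄T*)⁻¹g⟩ for all g ∈ K^⊥. Then x ∈ K and y = Tx. -/

import Mathlib

open scoped InnerProductSpace ComplexConjugate
open ContinuousLinearMap

section Aux

variable {H : Type*} [NormedAddCommGroup H] [InnerProductSpace ℂ H] [CompleteSpace H]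

private lemma aux_norm_lt (A : H →L[ℂ] H) (hA : ‖A‖ ≤ 1) {lam : ℂ}
    (hlam : ‖lam‖ < 1) : ‖lam • A‖ < 1 := by
  have h1 : ‖lam • A‖ ≤ ‖lam‖ * 1 := by
    rw [norm_smul]
    exact mul_le_mul_of_nonneg_left hA (norm_nonneg lam)
  linarith

private lemma aux_isUnit (A : H →L[ℂ] H) (hA : ‖A‖ ≤ 1) {lam : ℂ}
    (hlam : ‖lam‖ < 1) : IsUnit ((1 : H →L[ℂ] H) - lam • A) := by
  simpa using (Units.oneSub (lam • A) (aux_norm_lt A hA hlam)).isUnit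

private lemma aux_inv_apply (A : H →L[ℂ] H) (hA : ‖A‖ ≤ 1) {lam : ℂ}
    (hlam : ‖lam‖ < 1) (v : H) :
    Ring.inverse ((1 : H →L[ℂ] H) - lam • A) (((1 : H →L[ℂ] H) - lam • A) v) = v := by
  have h := Ring.inverse_mul_cancel _ (aux_isUnit A hA hlam)
  calc Ring.inverse ((1 : H →L[ℂ] H) - lam • A) (((1 : H →L[ℂ] H) - lam • A) v)
      = ((Ring.inverse ((1 : H →L[ℂ] H) - lam • A)) * ((1 : H →L[ℂ] H) - lam • A)) v := rfl
    _ = ((1 : H →L[ℂ] H)) v := by rw [h]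
    _ = v := rfl

private lemma aux_diff (A : H →L[ℂ] H) (hA : ‖A‖ ≤ 1) {lam : ℂ}
    (hlam : ‖lam‖ < 1) (z : H) :
    Ring.inverse ((1 : H →L[ℂ] H) - lam • A) z - z
      = lam • Ring.inverse ((1 : H →L[ℂ] H) - lam • A) (A z) := by
  have h1 : z - ((1 : H →L[ℂ] H) - lam • A) z = lam • (A z) := by
    simp [ContinuousLinearMap.sub_apply]
  calc Ring.inverse ((1 : H →L[ℂ] H) - lam • A) z - z
      = Ring.inverse ((1 : H →L[ℂ] H) - lam • A) z
        - Ring.inverse ((1 : H →L[ℂ] H) - lam • A) (((1 : H →L[ℂ] H) - lam • A) z) := by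
        rw [aux_inv_apply A hA hlam]
    _ = Ring.inverse ((1 : H →L[ℂ] H) - lam • A) (z - ((1 : H →L[ℂ] H) - lam • A) z) :=
        (map_sub _ _ _).symm
    _ = Ring.inverse ((1 : H →L[ℂ] H) - lam • A) (lam • (A z)) := by rw [h1]
    _ = lam • Ring.inverse ((1 : H →L[ℂ] H) - lam • A) (A z) := map_smul _ _ _

/-- If `(1-λA)⁻¹ z ∈ L` for all small nonzero `λ`, then `z ∈ L` (by continuity at `0`). -/
private lemma aux_mem_of_inv_mem (A : H →L[ℂ] H) (L : Submodule ℂ H)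
    (hL : IsClosed (L : Set H)) (z : H)
    (h : ∀ lam : ℂ, ‖lam‖ < 1 → lam ≠ 0 →
      Ring.inverse ((1 : H →L[ℂ] H) - lam • A) z ∈ L) :
    z ∈ L := by
  have h1 : Filter.Tendsto (fun lam : ℂ => (1 : H →L[ℂ] H) - lam • A) (nhds 0)
      (nhds ((1 : H →L[ℂ] H) - (0 : ℂ) • A)) := by
    have hc : Continuous (fun lam : ℂ => (1 : H →L[ℂ] H) - lam • A) :=
      continuous_const.sub (continuous_id.smul continuous_const)
    exact hc.tendsto 0
  have h2 : Filter.Tendsto (Ring.inverse : (H →L[ℂ] H) → (H →L[ℂ] H))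
      (nhds ((1 : H →L[ℂ] H) - (0 : ℂ) • A))
      (nhds (Ring.inverse ((1 : H →L[ℂ] H) - (0 : ℂ) • A))) := by
    have hc := NormedRing.inverse_continuousAt (1 : (H →L[ℂ] H)ˣ)
    have h0 : ((1 : (H →L[ℂ] H)ˣ) : H →L[ℂ] H) = (1 : H →L[ℂ] H) - (0 : ℂ) • A := by simp
    rw [h0] at hc
    exact hc
  have h3 : Filter.Tendsto (fun lam : ℂ => Ring.inverse ((1 : H →L[ℂ] H) - lam • A) z) (nhds 0)
      (nhds (Ring.inverse ((1 : H →L[ℂ] H) - (0 : ℂ) • A) z)) := by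
    have h4 := (((ContinuousLinearMap.apply ℂ H z).continuous.tendsto _)).comp (h2.comp h1)
    exact h4
  have h5 : Ring.inverse ((1 : H →L[ℂ] H) - (0 : ℂ) • A) z = z := by simp
  rw [h5] at h3
  have htend := h3.mono_left (nhdsWithin_le_nhds (s := {(0 : ℂ)}ᶜ))
  have hball : ∀ᶠ lam in nhds (0 : ℂ), ‖lam‖ < 1 := by
    filter_upwards [Metric.ball_mem_nhds (0 : ℂ) one_pos] with lam hlam
    simpa [Complex.dist_eq] using hlam
  have hev : ∀ᶠ lam in nhdsWithin (0 : ℂ) {(0 : ℂ)}ᶜ,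
      Ring.inverse ((1 : H →L[ℂ] H) - lam • A) z ∈ (L : Set H) := by
    filter_upwards [hball.filter_mono nhdsWithin_le_nhds, self_mem_nhdsWithin] with lam h1 h2
    exact h lam h1 h2
  exact hL.mem_of_tendsto htend hev

/-- If `(1-λA)⁻¹ z ∈ L` for all `λ` in the disk, then also `(1-λA)⁻¹ (A z) ∈ L`. -/
private lemma aux_step (A : H →L[ℂ] H) (hA : ‖A‖ ≤ 1) (L : Submodule ℂ H)
    (hL : IsClosed (L : Set H)) (z : H)
    (h : ∀ lam : ℂ, ‖lam‖ < 1 →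
      Ring.inverse ((1 : H →L[ℂ] H) - lam • A) z ∈ L) :
    ∀ lam : ℂ, ‖lam‖ < 1 →
      Ring.inverse ((1 : H →L[ℂ] H) - lam • A) (A z) ∈ L := by
  have hzL : z ∈ L := by
    have := h 0 (by simpa using zero_lt_one)
    simpa using this
  have hne : ∀ lam : ℂ, ‖lam‖ < 1 → lam ≠ 0 →
      Ring.inverse ((1 : H →L[ℂ] H) - lam • A) (A z) ∈ L := by
    intro lam hlam hlam0
    have hkey : Ring.inverse ((1 : H →L[ℂ] H) - lam • A) (A z)
        = lam⁻¹ • (Ring.inverse ((1 : H →L[ℂ] H) - lam • A) z - z) := by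
      rw [aux_diff A hA hlam z, inv_smul_smul₀ hlam0]
    rw [hkey]
    exact L.smul_mem _ (L.sub_mem (h lam hlam) hzL)
  intro lam hlam
  rcases eq_or_ne lam 0 with rfl | hlam0
  · have hmem : A z ∈ L := aux_mem_of_inv_mem A L hL (A z) hne
    simpa using hmem
  · exact hne lam hlam hlam0

/-- Main auxiliary lemma: from `(1-λA)⁻¹(p - λ q) ∈ L` for all `λ` in the disk,
conclude `p ∈ L` and `Aⁿ (A p - q) ∈ L` for all `n`. -/
private lemma aux_orbit (A : H →L[ℂ] H) (hA : ‖A‖ ≤ 1) (L : Submodule ℂ H)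
    (hL : IsClosed (L : Set H)) (p q : H)
    (h : ∀ lam : ℂ, ‖lam‖ < 1 →
      Ring.inverse ((1 : H →L[ℂ] H) - lam • A) (p - lam • q) ∈ L) :
    p ∈ L ∧ ∀ n : ℕ, (A ^ n) (A p - q) ∈ L := by
  have hp : p ∈ L := by
    have := h 0 (by simpa using zero_lt_one)
    simpa using this
  have hbase : ∀ lam : ℂ, ‖lam‖ < 1 →
      Ring.inverse ((1 : H →L[ℂ] H) - lam • A) (A p - q) ∈ L := by
    have hne : ∀ lam : ℂ, ‖lam‖ < 1 → lam ≠ 0 →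
        Ring.inverse ((1 : H →L[ℂ] H) - lam • A) (A p - q) ∈ L := by
      intro lam hlam hlam0
      have hsplit : p - lam • q = ((1 : H →L[ℂ] H) - lam • A) p + lam • (A p - q) := by
        rw [smul_sub]
        simp only [ContinuousLinearMap.sub_apply, ContinuousLinearMap.smul_apply,
          ContinuousLinearMap.one_apply]
        abel
      have hEp : Ring.inverse ((1 : H →L[ℂ] H) - lam • A) (p - lam • q)
          = p + lam • Ring.inverse ((1 : H →L[ℂ] H) - lam • A) (A p - q) := by
        rw [hsplit, map_add, aux_inv_apply A hA hlam, map_smul]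
      have hkey : Ring.inverse ((1 : H →L[ℂ] H) - lam • A) (A p - q)
          = lam⁻¹ • (Ring.inverse ((1 : H →L[ℂ] H) - lam • A) (p - lam • q) - p) := by
        rw [hEp]
        rw [add_sub_cancel_left, inv_smul_smul₀ hlam0]
      rw [hkey]
      exact L.smul_mem _ (L.sub_mem (h lam hlam) hp)
    intro lam hlam
    rcases eq_or_ne lam 0 with rfl | hlam0
    · have hmem : A p - q ∈ L := aux_mem_of_inv_mem A L hL _ hne
      simpa using hmem
    · exact hne lam hlam hlam0
  have main : ∀ n : ℕ, ∀ lam : ℂ, ‖lam‖ < 1 →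
      Ring.inverse ((1 : H →L[ℂ] H) - lam • A) ((A ^ n) (A p - q)) ∈ L := by
    intro n
    induction n with
    | zero => simpa using hbase
    | succ n ih =>
        intro lam hlam
        have h1 : (A ^ (n + 1)) (A p - q) = A ((A ^ n) (A p - q)) := by
          rw [pow_succ']; rfl
        rw [h1]
        exact aux_step A hA L hL _ ih lam hlam
  refine ⟨hp, fun n => ?_⟩
  have := main n 0 (by simpa using zero_lt_one)
  simpa using this

end Aux

set_option maxHeartbeats 1000000 in
/-- Let `T` be a completely non-unitary contraction on `H`
(the only closed `T`-invariant subspace on which `T` restricts to a unitary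
is `{0}`), `K = ker(Id − T*T)`, `K⋆ = ker(Id − TT*)`, and `x, y ∈ H`.
If for every `λ` with `|λ| < 1`:
(i) `⟨y, (Id − λ̄T)⁻¹f⟩ = λ⟨x, (Id − λ̄T)⁻¹f⟩` for all `f ∈ K⋆^⊥`, and
(ii) `⟨x, (Id − λ̄T*)⁻¹g⟩ = λ⟨y, (Id − λ̄T*)⁻¹g⟩` for all `g ∈ K^⊥`,
then `x ∈ K` and `y = Tx`. (Paper inner products `⟨·,·⟩` are linear in the
first variable, i.e. `⟨u,v⟩ = ⟪v,u⟫_ℂ` in Mathlib's convention; the inverses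
are `Ring.inverse`.) -/
theorem mem_graph_of_eigen_relations
    {H : Type*} [NormedAddCommGroup H] [InnerProductSpace ℂ H] [CompleteSpace H]
    (T : H →L[ℂ] H) (hT : ‖T‖ ≤ 1)
    (hcnu : ∀ 𝒦 : Submodule ℂ H, IsClosed (𝒦 : Set H) →
      (∀ v ∈ 𝒦, T v ∈ 𝒦) → (∀ v ∈ 𝒦, ‖T v‖ = ‖v‖) →
      T '' (𝒦 : Set H) = (𝒦 : Set H) → 𝒦 = ⊥)
    (K Ks : Submodule ℂ H)
    (hK : K = LinearMap.ker (((1 - adjoint T ∘L T : H →L[ℂ] H) : H →ₗ[ℂ] H)))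
    (hKs : Ks = LinearMap.ker (((1 - T ∘L adjoint T : H →L[ℂ] H) : H →ₗ[ℂ] H)))
    (x y : H)
    (h1 : ∀ (lam : ℂ), ‖lam‖ < 1 → ∀ f ∈ Ksᗮ,
      ⟪Ring.inverse (1 - (conj lam) • T) f, y⟫_ℂ
        = lam * ⟪Ring.inverse (1 - (conj lam) • T) f, x⟫_ℂ)
    (h2 : ∀ (lam : ℂ), ‖lam‖ < 1 → ∀ g ∈ Kᗮ,
      ⟪Ring.inverse (1 - (conj lam) • adjoint T) g, x⟫_ℂ
        = lam * ⟪Ring.inverse (1 - (conj lam) • adjoint T) g, y⟫_ℂ) :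
    x ∈ K ∧ y = T x := by
  have hTadj : ‖adjoint T‖ ≤ 1 := by
    rw [← ContinuousLinearMap.star_eq_adjoint, norm_star]; exact hT
  -- closedness of K, Ks
  have hKclosed : IsClosed (K : Set H) := by
    rw [hK]; exact ContinuousLinearMap.isClosed_ker _
  have hKsclosed : IsClosed (Ks : Set H) := by
    rw [hKs]; exact ContinuousLinearMap.isClosed_ker _
  haveI : CompleteSpace K := hKclosed.completeSpace_coe
  haveI : CompleteSpace Ks := hKsclosed.completeSpace_coe
  have hKoo : Kᗮᗮ = K := Submodule.orthogonal_orthogonal K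
  have hKsoo : Ksᗮᗮ = Ks := Submodule.orthogonal_orthogonal Ks
  -- membership characterizations
  have memK : ∀ v : H, v ∈ K ↔ adjoint T (T v) = v := by
    intro v
    rw [hK, LinearMap.mem_ker, ContinuousLinearMap.coe_coe]
    have happ : ((1 : H →L[ℂ] H) - adjoint T ∘L T) v = v - adjoint T (T v) := by
      simp [ContinuousLinearMap.sub_apply]
    rw [happ, sub_eq_zero, eq_comm]
  have memKs : ∀ v : H, v ∈ Ks ↔ T (adjoint T v) = v := by
    intro v
    rw [hKs, LinearMap.mem_ker, ContinuousLinearMap.coe_coe]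
    have happ : ((1 : H →L[ℂ] H) - T ∘L adjoint T) v = v - T (adjoint T v) := by
      simp [ContinuousLinearMap.sub_apply]
    rw [happ, sub_eq_zero, eq_comm]
  -- translate h2 into a vector statement
  have hdag : ∀ lam : ℂ, ‖lam‖ < 1 →
      Ring.inverse ((1 : H →L[ℂ] H) - lam • T) (x - lam • y) ∈ K := by
    intro lam hlam
    have hadj : adjoint (Ring.inverse ((1 : H →L[ℂ] H) - (conj lam) • adjoint T))
        = Ring.inverse ((1 : H →L[ℂ] H) - lam • T) := by
      rw [← ContinuousLinearMap.star_eq_adjoint, ← Ring.inverse_star]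
      congr 1
      simp [star_sub, star_smul, ContinuousLinearMap.star_eq_adjoint, adjoint_adjoint,
        Complex.star_def, Complex.conj_conj]
    rw [← hadj, ← hKoo, Submodule.mem_orthogonal]
    intro g hg
    rw [ContinuousLinearMap.adjoint_inner_right, inner_sub_right, inner_smul_right,
      h2 lam hlam g hg]
    ring
  -- translate h1 into a vector statement
  have hddag : ∀ lam : ℂ, ‖lam‖ < 1 →
      Ring.inverse ((1 : H →L[ℂ] H) - lam • adjoint T) (y - lam • x) ∈ Ks := by
    intro lam hlam
    have hadj : adjoint (Ring.inverse ((1 : H →L[ℂ] H) - (conj lam) • T))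
        = Ring.inverse ((1 : H →L[ℂ] H) - lam • adjoint T) := by
      rw [← ContinuousLinearMap.star_eq_adjoint, ← Ring.inverse_star]
      congr 1
      simp [star_sub, star_smul, ContinuousLinearMap.star_eq_adjoint,
        Complex.star_def, Complex.conj_conj]
    rw [← hadj, ← hKsoo, Submodule.mem_orthogonal]
    intro f hf
    rw [ContinuousLinearMap.adjoint_inner_right, inner_sub_right, inner_smul_right,
      h1 lam hlam f hf]
    ring
  obtain ⟨hxK, hTu⟩ := aux_orbit T hT K hKclosed x y hdag
  obtain ⟨hyKs, hTw⟩ := aux_orbit (adjoint T) hTadj Ks hKsclosed y x hddag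
  set u : H := T x - y with hu_def
  set w : H := adjoint T y - x with hw_def
  -- basic algebraic facts
  have normK : ∀ v, v ∈ K → ‖T v‖ = ‖v‖ := by
    intro v hv
    have h1 : ⟪T v, T v⟫_ℂ = ⟪v, v⟫_ℂ := by
      rw [← ContinuousLinearMap.adjoint_inner_right, (memK v).mp hv]
    have h3 : ‖T v‖ ^ 2 = ‖v‖ ^ 2 := by
      rw [← @inner_self_eq_norm_sq ℂ, ← @inner_self_eq_norm_sq ℂ, h1]
    calc ‖T v‖ = Real.sqrt (‖T v‖ ^ 2) := (Real.sqrt_sq (norm_nonneg _)).symm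
      _ = Real.sqrt (‖v‖ ^ 2) := by rw [h3]
      _ = ‖v‖ := Real.sqrt_sq (norm_nonneg _)
  have hKsK : ∀ v, v ∈ Ks → adjoint T v ∈ K := by
    intro v hv
    rw [memK]
    rw [(memKs v).mp hv]
  have hTww : T w = -u := by
    rw [hw_def, map_sub, (memKs y).mp hyKs, hu_def]
    abel
  have hwK : w ∈ K := K.sub_mem (hKsK y hyKs) hxK
  have hwnK : ∀ n : ℕ, ((adjoint T) ^ n) w ∈ K := by
    intro n
    cases n with
    | zero => simpa using hwK
    | succ n =>
        have h1 : ((adjoint T) ^ (n + 1)) w = adjoint T (((adjoint T) ^ n) w) := by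
          rw [pow_succ']; rfl
        rw [h1]
        exact hKsK _ (hTw n)
  have hTwn : ∀ n : ℕ, T (((adjoint T) ^ (n + 1)) w) = ((adjoint T) ^ n) w := by
    intro n
    have h1 : ((adjoint T) ^ (n + 1)) w = adjoint T (((adjoint T) ^ n) w) := by
      rw [pow_succ']; rfl
    rw [h1, (memKs _).mp (hTw n)]
  -- the generating set and subspaces
  set Sg : Set H :=
    (Set.range fun n : ℕ => (T ^ n) u) ∪ (Set.range fun n : ℕ => ((adjoint T) ^ n) w)
    with hSg_def
  set M0 : Submodule ℂ H := Submodule.span ℂ Sg with hM0_def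
  set M : Submodule ℂ H := M0.topologicalClosure with hM_def
  have hM0M : M0 ≤ M := Submodule.le_topologicalClosure M0
  have hMclosed : IsClosed (M : Set H) := M0.isClosed_topologicalClosure
  haveI : CompleteSpace M := hMclosed.completeSpace_coe
  have uMem0 : u ∈ M0 := Submodule.subset_span (Or.inl ⟨0, by simp⟩)
  have wMem0 : w ∈ M0 := Submodule.subset_span (Or.inr ⟨0, by simp⟩)
  have hSgK : Sg ⊆ (K : Set H) := by
    rintro s (⟨n, rfl⟩ | ⟨n, rfl⟩)
    · exact hTu n
    · exact hwnK n
  have hM0K : M0 ≤ K := Submodule.span_le.mpr hSgK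
  have hMK : M ≤ K := M0.topologicalClosure_minimal hM0K hKclosed
  -- invariance
  have hTS : ∀ s ∈ Sg, T s ∈ M0 := by
    rintro s (⟨n, rfl⟩ | ⟨n, rfl⟩)
    · refine Submodule.subset_span (Or.inl ⟨n + 1, ?_⟩)
      show (T ^ (n + 1)) u = T ((T ^ n) u)
      rw [pow_succ']; rfl
    · cases n with
      | zero =>
          have h0 : T (((adjoint T) ^ 0) w) = -u := by simpa using hTww
          rw [h0]
          exact M0.neg_mem uMem0
      | succ n =>
          rw [hTwn n]
          exact Submodule.subset_span (Or.inr ⟨n, rfl⟩)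
  have hTM0 : ∀ v ∈ M0, T v ∈ M0 := by
    intro v hv
    induction hv using Submodule.span_induction with
    | mem s hs => exact hTS s hs
    | zero => simpa using M0.zero_mem
    | add a b _ _ iha ihb => rw [map_add]; exact M0.add_mem iha ihb
    | smul c a _ iha => rw [map_smul]; exact M0.smul_mem c iha
  have hTM : ∀ v ∈ M, T v ∈ M := by
    intro v hv
    have hv' : v ∈ closure (M0 : Set H) := by
      rw [← Submodule.topologicalClosure_coe]
      exact hv
    have h1 : T v ∈ closure (T '' (M0 : Set H)) :=
      image_closure_subset_closure_image T.continuous (Set.mem_image_of_mem _ hv')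
    have h2 : T '' (M0 : Set H) ⊆ (M0 : Set H) := by
      rintro _ ⟨a, ha, rfl⟩; exact hTM0 a ha
    have h3 : T v ∈ closure (M0 : Set H) := closure_mono h2 h1
    show T v ∈ (M : Set H)
    rw [hM_def]
    rw [Submodule.topologicalClosure_coe]
    exact h3
  have hMnorm : ∀ v ∈ M, ‖T v‖ = ‖v‖ := fun v hv => normK v (hMK hv)
  -- surjectivity of T on M
  let ψ : M →ₗᵢ[ℂ] H :=
    { toLinearMap := (T : H →ₗ[ℂ] H).comp M.subtype
      norm_map' := fun v => hMnorm v v.2 }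
  have hψ : ∀ v : M, ψ v = T (v : H) := fun v => rfl
  have hclosedrange : IsClosed (Set.range ψ) := ψ.isometry.isClosedEmbedding.isClosed_range
  set N : Submodule ℂ H := LinearMap.range ψ.toLinearMap with hN_def
  have hNcoe : (N : Set H) = Set.range ψ := by
    rw [hN_def, LinearMap.coe_range, LinearIsometry.coe_toLinearMap]
  have hSgN : Sg ⊆ (N : Set H) := by
    rintro s (⟨n, rfl⟩ | ⟨n, rfl⟩)
    · cases n with
      | zero =>
          refine LinearMap.mem_range.mpr ⟨⟨-w, M.neg_mem (hM0M wMem0)⟩, ?_⟩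
          show T (-w) = (T ^ 0) u
          rw [map_neg, hTww, neg_neg, pow_zero]
          rfl
      | succ n =>
          refine LinearMap.mem_range.mpr
            ⟨⟨(T ^ n) u, hM0M (Submodule.subset_span (Or.inl ⟨n, rfl⟩))⟩, ?_⟩
          show T ((T ^ n) u) = (T ^ (n + 1)) u
          rw [pow_succ']; rfl
    · refine LinearMap.mem_range.mpr
        ⟨⟨((adjoint T) ^ (n + 1)) w, hM0M (Submodule.subset_span (Or.inr ⟨n + 1, rfl⟩))⟩, ?_⟩
      show T (((adjoint T) ^ (n + 1)) w) = ((adjoint T) ^ n) w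
      exact hTwn n
  have hM0N : M0 ≤ N := Submodule.span_le.mpr hSgN
  have hNclosed : IsClosed (N : Set H) := by rw [hNcoe]; exact hclosedrange
  have hMN : M ≤ N := M0.topologicalClosure_minimal hM0N hNclosed
  have himg : T '' (M : Set H) = (M : Set H) := by
    apply Set.Subset.antisymm
    · rintro _ ⟨v, hv, rfl⟩
      exact hTM v hv
    · intro v hv
      obtain ⟨m, hm⟩ := LinearMap.mem_range.mp (hMN hv)
      exact ⟨(m : H), m.2, hm⟩
  have hMbot : M = ⊥ := hcnu M hMclosed hTM hMnorm himg
  have hu0 : u = 0 := by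
    have huM : u ∈ M := hM0M uMem0
    rw [hMbot] at huM
    simpa using huM
  refine ⟨hxK, ?_⟩
  have : T x - y = 0 := by rw [← hu_def]; exact hu0
  have := sub_eq_zero.mp this
  exact this.symm
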